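/- For every a ∈ ℝ: ∫_ℝ q²·e^{−q²}·(e^{−a²} + cos(2aq)) dq / (√π·(1 + e^{−a²})) = (1 − a²)/(e^{a²} + 1). Equivalently, for the cat-state Wigner cross-section π·W(0,q) = e^{−q²}(e^{−a²} + cos(2aq))/(1 + e^{−a²}), one has √π·∫_ℝ W(0,q)·q² dq = (1 − a²)/(e^{a²}+1); in particular this second moment is negative for a² > 1, so the ratio of the two Wigner moments equals −α''/2 with α''(0) = a² − 1. -/

import Mathlib

open Real

open MeasureTheory Filter Complex

lemma aux_int_base : Integrable fun q : ℝ => q ^ 2 * Real.exp (-q ^ 2) := by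
  have h := integrable_rpow_mul_exp_neg_mul_sq (b := 1) one_pos (s := 2) (by norm_num)
  simpa [Real.rpow_two] using h

lemma aux_int1 (a : ℝ) : Integrable fun q : ℝ => Real.exp (-q ^ 2) * Real.cos (2 * a * q) := by
  refine (integrable_exp_neg_mul_sq one_pos).mono' ?_ ?_
  · exact (Continuous.mul (by continuity) (by continuity)).aestronglyMeasurable
  · filter_upwards with q
    rw [Real.norm_eq_abs, abs_mul, _root_.abs_of_nonneg (Real.exp_pos _).le]
    calc Real.exp (-q ^ 2) * |Real.cos (2 * a * q)| ≤ Real.exp (-q ^ 2) * 1 :=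
          mul_le_mul_of_nonneg_left (abs_cos_le_one _) (Real.exp_pos _).le
      _ = Real.exp (-1 * q ^ 2) := by rw [mul_one]; ring_nf

lemma aux_int2 (a : ℝ) : Integrable fun q : ℝ => q ^ 2 * Real.exp (-q ^ 2) * Real.cos (2 * a * q) := by
  refine aux_int_base.mono' ?_ ?_
  · exact (Continuous.mul (by continuity) (by continuity)).aestronglyMeasurable
  · filter_upwards with q
    rw [Real.norm_eq_abs, abs_mul, abs_mul, _root_.abs_of_nonneg (Real.exp_pos _).le,
      _root_.abs_of_nonneg (sq_nonneg q)]
    calc q ^ 2 * Real.exp (-q ^ 2) * |Real.cos (2 * a * q)| ≤ q ^ 2 * Real.exp (-q ^ 2) * 1 :=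
          mul_le_mul_of_nonneg_left (abs_cos_le_one _)
            (mul_nonneg (sq_nonneg q) (Real.exp_pos _).le)
      _ = q ^ 2 * Real.exp (-q ^ 2) := mul_one _

/-- Gaussian–cosine integral. -/
lemma gauss_cos (a : ℝ) :
    ∫ q : ℝ, Real.exp (-q ^ 2) * Real.cos (2 * a * q) = Real.sqrt π * Real.exp (-a ^ 2) := by
  have hb : (-1 : ℂ).re < 0 := by simp
  have h := integral_cexp_quadratic hb (2 * a * Complex.I) 0
  have hint := integrable_cexp_quadratic' hb (2 * a * Complex.I) 0
  have hre : ∀ q : ℝ, (Complex.exp ((-1 : ℂ) * q ^ 2 + (2 * a * Complex.I) * q + 0)).re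
      = Real.exp (-q ^ 2) * Real.cos (2 * a * q) := by
    intro q
    have hz : ((-1 : ℂ) * q ^ 2 + (2 * a * Complex.I) * q + 0)
        = ((-q ^ 2 : ℝ) : ℂ) + ((2 * a * q : ℝ) : ℂ) * Complex.I := by
      push_cast; ring
    rw [hz, Complex.exp_re]
    simp [← Complex.ofReal_pow]
  have h2 : ∫ q : ℝ, Real.exp (-q ^ 2) * Real.cos (2 * a * q)
      = (∫ q : ℝ, Complex.exp ((-1 : ℂ) * q ^ 2 + (2 * a * Complex.I) * q + 0)).re := by
    have h2' := integral_re (𝕜 := ℂ) hint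
    simp only [RCLike.re_to_complex] at h2'
    rw [← h2']
    exact integral_congr_ae (Filter.Eventually.of_forall fun q => (hre q).symm)
  rw [h2, h]
  have h3 : ((0 : ℂ) - (2 * a * Complex.I) ^ 2 / (4 * (-1)) ) = ((-a ^ 2 : ℝ) : ℂ) := by
    have : (Complex.I) ^ 2 = -1 := Complex.I_sq
    push_cast
    rw [mul_pow, mul_pow, this]
    ring
  have h4 : ((π : ℂ) / -(-1)) ^ (1 / 2 : ℂ) = ((Real.sqrt π : ℝ) : ℂ) := by
    rw [show ((π : ℂ) / -(-1)) = ((π : ℝ) : ℂ) by norm_num,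
      show ((1 / 2 : ℂ)) = (((1 / 2 : ℝ) : ℂ)) by norm_num,
      ← Complex.ofReal_cpow Real.pi_pos.le, Real.sqrt_eq_rpow]
  rw [h3, h4, ← Complex.ofReal_exp, ← Complex.ofReal_mul, Complex.ofReal_re]

lemma key (a : ℝ) :
    ∫ q : ℝ, q ^ 2 * Real.exp (-q ^ 2) * Real.cos (2 * a * q)
      = (1 / 2 - a ^ 2) * (Real.sqrt π * Real.exp (-a ^ 2)) := by
  set g : ℝ → ℝ := fun q => -(1 / 2) * (q * Real.exp (-q ^ 2) * Real.cos (2 * a * q))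
      + (a / 2) * (Real.exp (-q ^ 2) * Real.sin (2 * a * q)) with hg
  have hderiv : ∀ q : ℝ, HasDerivAt g
      (q ^ 2 * Real.exp (-q ^ 2) * Real.cos (2 * a * q)
        - (1 / 2 - a ^ 2) * (Real.exp (-q ^ 2) * Real.cos (2 * a * q))) q := by
    intro q
    have he : HasDerivAt (fun q : ℝ => Real.exp (-q ^ 2)) (Real.exp (-q ^ 2) * (-(2 * q))) q := by
      have := ((hasDerivAt_pow 2 q).neg).exp
      simpa using this
    have hc : HasDerivAt (fun q : ℝ => Real.cos (2 * a * q)) (-Real.sin (2 * a * q) * (2 * a)) q := by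
      have := ((hasDerivAt_id q).const_mul (2 * a)).cos
      simpa using this
    have hs : HasDerivAt (fun q : ℝ => Real.sin (2 * a * q)) (Real.cos (2 * a * q) * (2 * a)) q := by
      have := ((hasDerivAt_id q).const_mul (2 * a)).sin
      simpa using this
    have h1 := (((hasDerivAt_id q).mul he).mul hc).const_mul (-(1 / 2) : ℝ)
    have h2 := (he.mul hs).const_mul ((a / 2) : ℝ)
    have := h1.add h2
    refine this.congr_deriv ?_
    simp only [id_eq, Pi.mul_apply]
    ring
  have hint' : Integrable fun q : ℝ =>
      q ^ 2 * Real.exp (-q ^ 2) * Real.cos (2 * a * q)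
        - (1 / 2 - a ^ 2) * (Real.exp (-q ^ 2) * Real.cos (2 * a * q)) :=
    (aux_int2 a).sub ((aux_int1 a).const_mul _)
  have hb0 : Tendsto (fun q : ℝ => |q| * Real.exp (-q ^ 2)) (cocompact ℝ) (nhds 0) := by
    have := tendsto_rpow_abs_mul_exp_neg_mul_sq_cocompact one_pos 1
    simpa using this
  have he0 : Tendsto (fun q : ℝ => Real.exp (-q ^ 2)) (cocompact ℝ) (nhds 0) := by
    have := tendsto_rpow_abs_mul_exp_neg_mul_sq_cocompact one_pos 0
    simpa using this
  have hg0 : Tendsto g (cocompact ℝ) (nhds 0) := by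
    have hB : Tendsto (fun q : ℝ => 1 / 2 * (|q| * Real.exp (-q ^ 2)) + |a| / 2 * Real.exp (-q ^ 2))
        (cocompact ℝ) (nhds 0) := by
      have := (hb0.const_mul (1 / 2 : ℝ)).add (he0.const_mul (|a| / 2 : ℝ))
      simpa using this
    refine squeeze_zero_norm ?_ hB
    · intro q
      rw [Real.norm_eq_abs, hg]
      calc |(-(1 / 2) * (q * Real.exp (-q ^ 2) * Real.cos (2 * a * q))
              + (a / 2) * (Real.exp (-q ^ 2) * Real.sin (2 * a * q)))|
          ≤ |(-(1 / 2) : ℝ) * (q * Real.exp (-q ^ 2) * Real.cos (2 * a * q))|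
            + |(a / 2) * (Real.exp (-q ^ 2) * Real.sin (2 * a * q))| := abs_add_le _ _
        _ = 1 / 2 * (|q| * Real.exp (-q ^ 2) * |Real.cos (2 * a * q)|)
            + |a| / 2 * (Real.exp (-q ^ 2) * |Real.sin (2 * a * q)|) := by
            simp [abs_mul, abs_div, _root_.abs_of_nonneg (Real.exp_pos _).le]
        _ ≤ 1 / 2 * (|q| * Real.exp (-q ^ 2) * 1) + |a| / 2 * (Real.exp (-q ^ 2) * 1) := by
            gcongr
            · exact Real.abs_cos_le_one _
            · exact Real.abs_sin_le_one _
        _ = 1 / 2 * (|q| * Real.exp (-q ^ 2)) + |a| / 2 * Real.exp (-q ^ 2) := by ring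
  have hbot : Tendsto g atBot (nhds 0) :=
    hg0.mono_left (by rw [cocompact_eq_atBot_atTop]; exact le_sup_left)
  have htop : Tendsto g atTop (nhds 0) :=
    hg0.mono_left (by rw [cocompact_eq_atBot_atTop]; exact le_sup_right)
  have hFTC := integral_of_hasDerivAt_of_tendsto hderiv hint' hbot htop
  rw [integral_sub (aux_int2 a) ((aux_int1 a).const_mul _), integral_const_mul,
    gauss_cos a] at hFTC
  linarith

lemma hI0 : ∫ q : ℝ, q ^ 2 * Real.exp (-q ^ 2) = Real.sqrt π / 2 := by
  have h := key 0
  norm_num at h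
  linarith

/-- Second moment of the cat-state Wigner cross-section:
`∫ q²e^{−q²}(e^{−a²} + cos(2aq)) dq / (√π(1 + e^{−a²})) = (1 − a²)/(e^{a²} + 1)`. -/
theorem stmt_17 (a : ℝ) :
    (∫ q : ℝ, q ^ 2 * Real.exp (-q ^ 2) * (Real.exp (-a ^ 2) + Real.cos (2 * a * q))) /
      (Real.sqrt π * (1 + Real.exp (-a ^ 2))) = (1 - a ^ 2) / (Real.exp (a ^ 2) + 1) := by
  have hsplit : (fun q : ℝ => q ^ 2 * Real.exp (-q ^ 2) * (Real.exp (-a ^ 2) + Real.cos (2 * a * q)))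
      = fun q : ℝ => Real.exp (-a ^ 2) * (q ^ 2 * Real.exp (-q ^ 2))
        + q ^ 2 * Real.exp (-q ^ 2) * Real.cos (2 * a * q) := by
    funext q; ring
  rw [hsplit, integral_add (aux_int_base.const_mul _) (aux_int2 a), integral_const_mul, hI0, key a]
  have hπ : (0 : ℝ) < Real.sqrt π := Real.sqrt_pos.mpr Real.pi_pos
  have h1 : (0 : ℝ) < Real.exp (a ^ 2) := Real.exp_pos _
  have hE : Real.exp (-a ^ 2) = (Real.exp (a ^ 2))⁻¹ := Real.exp_neg _
  rw [hE]
  field_simp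
  ring
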